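/- Let C, D ∈ ℂ ∖ {0, 1} with C ≠ D and C·D ≠ 1. Then the discrete exponential z : ℤ² → ℂ, z_{k,m} = C^k·D^m, is a discrete conformal map with cross-ratio q = C·(1 − D)² / (D·(1 − C)²). -/
import Mathlib


/-- `z : ℤ² → ℂ` is a discrete conformal map with cross-ratio `q ∈ ℂ ∖ {0,1}`. -/
def IsDCM (q : ℂ) (z : ℤ → ℤ → ℂ) : Prop :=
  q ≠ 0 ∧ q ≠ 1 ∧ ∀ k m : ℤ,
    (z k m ≠ z (k+1) m ∧ z k m ≠ z k (m+1) ∧ z k m ≠ z (k+1) (m+1) ∧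
     z (k+1) m ≠ z k (m+1) ∧ z (k+1) m ≠ z (k+1) (m+1) ∧ z k (m+1) ≠ z (k+1) (m+1)) ∧
    (z k (m+1) - z k m) * (z (k+1) m - z (k+1) (m+1)) =
      q * ((z k m - z (k+1) m) * (z (k+1) (m+1) - z k (m+1)))

/-- The discrete exponential `z_{k,m} = C^k·D^m` (with `C, D ∉ {0,1}`, `C ≠ D`,
`C·D ≠ 1`) is a discrete conformal map with cross-ratio `C·(1 − D)²/(D·(1 − C)²)`. -/
theorem discreteExponential_isDCM (C D : ℂ)
    (hC0 : C ≠ 0) (hC1 : C ≠ 1) (hD0 : D ≠ 0) (hD1 : D ≠ 1)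
    (hCD : C ≠ D) (hCD1 : C * D ≠ 1) :
    IsDCM (C * (1 - D) ^ 2 / (D * (1 - C) ^ 2)) (fun k m : ℤ => C ^ k * D ^ m) := by
  have h1C : (1 : ℂ) - C ≠ 0 := sub_ne_zero.mpr (Ne.symm hC1)
  have h1D : (1 : ℂ) - D ≠ 0 := sub_ne_zero.mpr (Ne.symm hD1)
  refine ⟨?_, ?_, ?_⟩
  · exact div_ne_zero (mul_ne_zero hC0 (pow_ne_zero _ h1D))
      (mul_ne_zero hD0 (pow_ne_zero _ h1C))
  · intro h
    rw [div_eq_one_iff_eq (mul_ne_zero hD0 (pow_ne_zero _ h1C))] at h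
    have : (C - D) * (1 - C * D) = 0 := by linear_combination h
    rcases mul_eq_zero.mp this with h' | h'
    · exact hCD (sub_eq_zero.mp h')
    · exact hCD1 ((sub_eq_zero.mp h').symm)
  · intro k m
    have ha : (C : ℂ) ^ k ≠ 0 := zpow_ne_zero _ hC0
    have hb : (D : ℂ) ^ m ≠ 0 := zpow_ne_zero _ hD0
    simp only [zpow_add_one₀ hC0, zpow_add_one₀ hD0]
    constructor
    · have hab : C ^ k * D ^ m ≠ 0 := mul_ne_zero ha hb
      refine ⟨?_, ?_, ?_, ?_, ?_, ?_⟩ <;> intro h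
      · exact hC1 (mul_left_cancel₀ hab (by linear_combination -h) : C = 1)
      · exact hD1 (mul_left_cancel₀ hab (by linear_combination -h) : D = 1)
      · exact hCD1 (mul_left_cancel₀ hab (by linear_combination -h) : C * D = 1)
      · exact hCD (mul_left_cancel₀ hab (by linear_combination h) : C = D)
      · exact hD1 (mul_left_cancel₀ (mul_ne_zero hab hC0) (by linear_combination -h) : D = 1)
      · exact hC1 (mul_left_cancel₀ (mul_ne_zero hab hD0) (by linear_combination -h) : C = 1)
    · field_simp
      ring
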